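/- With the parameters of the Partition reduction (m_* = 1/4, m_• = 1, w_• = (2T+5/4)^5, w_* = 4w_•(1 − 1/(T+5/4))^2), the following identity holds for all K with 1 ≤ K ≤ T and each sign choice ±: ∓ K·w_*·m_*/((T+m_*)(T±K+m_*)) ± K·w_•·m_•/((T+m_*+m_•)(T±K+m_*+m_•)) = K²·w_•·m_•²/((T+m_*+m_•)²·(T±K+m_*+m_•)·(T±K+m_*)). -/

import Mathlib

theorem frac_aux (a S K w : ℝ) (ha : a ≠ 0) (ha1 : a + 1 ≠ 0)
    (hb : a + S ≠ 0) (hb1 : a + S + 1 ≠ 0) :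
    - (K * (w * a ^ 2 / (a + 1) ^ 2) / (a * (a + S)))
        + K * w / ((a + 1) * (a + S + 1))
      = S * K * w / ((a + 1) ^ 2 * (a + S + 1) * (a + S)) := by
  field_simp
  ring

/-- The fraction identity used in the proof of `O_min(T) > O_max(T ± K)`,
for both sign choices. -/
theorem fraction_identity (T K : ℝ) (hT : 1 ≤ T) (hK1 : 1 ≤ K) (hKT : K ≤ T) :
    let ms : ℝ := 1 / 4
    let mb : ℝ := 1
    let wb : ℝ := (2 * T + 5 / 4) ^ 5
    let ws : ℝ := 4 * wb * (1 - 1 / (T + 5 / 4)) ^ 2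
    -- sign choice "+":
    (- (K * ws * ms / ((T + ms) * (T + K + ms)))
        + K * wb * mb / ((T + ms + mb) * (T + K + ms + mb))
      = K ^ 2 * wb * mb ^ 2
        / ((T + ms + mb) ^ 2 * (T + K + ms + mb) * (T + K + ms))) ∧
    -- sign choice "−":
    (K * ws * ms / ((T + ms) * (T - K + ms))
        - K * wb * mb / ((T + ms + mb) * (T - K + ms + mb))
      = K ^ 2 * wb * mb ^ 2
        / ((T + ms + mb) ^ 2 * (T - K + ms + mb) * (T - K + ms))) := by
  intro ms mb wb ws
  have ha : T + 1/4 ≠ 0 := by nlinarith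
  have ha1 : T + 1/4 + 1 ≠ 0 := by nlinarith
  have h54 : T + 5/4 ≠ 0 := by nlinarith
  have key : ws * ms = wb * (T + 1/4) ^ 2 / (T + 1/4 + 1) ^ 2 := by
    simp only [ws, ms]
    rw [show (1 : ℝ) - 1 / (T + 5/4) = (T + 1/4) / (T + 1/4 + 1) by
      rw [eq_div_iff (by nlinarith : T + 1/4 + 1 ≠ (0:ℝ)), sub_mul, one_mul,
        show T + 1/4 + 1 = T + 5/4 by ring, one_div_mul_cancel h54]; ring]
    rw [div_pow]
    field_simp
  constructor
  · have hb : T + 1/4 + K ≠ 0 := by nlinarith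
    have hb1 : T + 1/4 + K + 1 ≠ 0 := by nlinarith
    have := frac_aux (T + 1/4) K K wb ha ha1 hb hb1
    simp only [ms, mb]
    rw [show T + K + 1/4 = T + 1/4 + K by ring]
    calc - (K * ws * (1/4) / ((T + 1/4) * (T + 1/4 + K))) + K * wb * 1 / ((T + 1/4 + 1) * (T + 1/4 + K + 1))
        = - (K * (wb * (T + 1/4) ^ 2 / (T + 1/4 + 1) ^ 2) / ((T + 1/4) * (T + 1/4 + K)))
            + K * wb / ((T + 1/4 + 1) * (T + 1/4 + K + 1)) := by rw [← key]; simp only [ms]; ring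
      _ = K * K * wb / ((T + 1/4 + 1) ^ 2 * (T + 1/4 + K + 1) * (T + 1/4 + K)) := this
      _ = K ^ 2 * wb * 1 ^ 2 / ((T + 1/4 + 1) ^ 2 * (T + 1/4 + K + 1) * (T + 1/4 + K)) := by ring_nf
  · have hb : T + 1/4 + -K ≠ 0 := by nlinarith
    have hb1 : T + 1/4 + -K + 1 ≠ 0 := by nlinarith
    have := frac_aux (T + 1/4) (-K) K wb ha ha1 hb hb1
    simp only [ms, mb]
    rw [show T - K + 1/4 = T + 1/4 + -K by ring]
    calc K * ws * (1/4) / ((T + 1/4) * (T + 1/4 + -K)) - K * wb * 1 / ((T + 1/4 + 1) * (T + 1/4 + -K + 1))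
        = - (- (K * (wb * (T + 1/4) ^ 2 / (T + 1/4 + 1) ^ 2) / ((T + 1/4) * (T + 1/4 + -K)))
            + K * wb / ((T + 1/4 + 1) * (T + 1/4 + -K + 1))) := by rw [← key]; simp only [ms]; ring
      _ = - (-K * K * wb / ((T + 1/4 + 1) ^ 2 * (T + 1/4 + -K + 1) * (T + 1/4 + -K))) := by rw [this]
      _ = K ^ 2 * wb * 1 ^ 2 / ((T + 1/4 + 1) ^ 2 * (T + 1/4 + -K + 1) * (T + 1/4 + -K)) := by ring_nf
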